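/- Let G = (V,E) be a graph and Q ⊆ V a set of 'queried' vertices at time 2 with observed values ENV(Q,1) all equal to 0 and a subset Q₁ ⊆ Q of vertices with ENV(v,2) = 1 for v ∈ Q₁ and ENV(v,2) = 0 for v ∈ Q∖Q₁ =: Q₀. Suppose for every v ∈ Q₁ there exists a vertex p_v ∈ N(v) with p_v ∉ Q and p_v ∉ N(Q₀). Then there exists an environment ENV' following the 1-BP rule (no violating pairs) that agrees with the observed values: ENV'(u,1) = 0 for u ∈ Q, ENV'(v,2) = 1 for v ∈ Q₁, and ENV'(v,2) = 0 for v ∈ Q₀. Specifically, setting ENV'(u,1) = 1 iff u = p_v for some v ∈ Q₁, and ENV'(u,2) = 1 iff u ∈ N(p_v) for some v ∈ Q₁, works. -/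
import Mathlib


/-- If `Q` is queried (all white at step 1), `Q₁ ⊆ Q` is black at step 2,
`Q₀ = Q∖Q₁` is white at step 2, and every `v ∈ Q₁` has a neighbor `p_v ∉ Q ∪ N(Q₀)`,
then some environment following 1-BP agrees with all observed values. -/
theorem stmt19 {V : Type*} [Fintype V] [DecidableEq V] (G : SimpleGraph V)
    [DecidableRel G.Adj] (Q Q₁ : Finset V) (hQ₁ : Q₁ ⊆ Q)
    (ENV : V → Fin 2 → Bool)
    (hobs1 : ∀ v ∈ Q, ENV v 0 = false)
    (hobs2 : ∀ v ∈ Q₁, ENV v 1 = true)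
    (hobs3 : ∀ v ∈ Q \ Q₁, ENV v 1 = false)
    (hp : ∀ v ∈ Q₁, ∃ p, G.Adj v p ∧ p ∉ Q ∧ ∀ w ∈ Q \ Q₁, ¬ G.Adj w p) :
    ∃ ENV' : V → Fin 2 → Bool,
      (∀ v, ENV' v 1 = true ↔ ∃ u ∈ G.neighborFinset v, ENV' u 0 = true) ∧
      (∀ v ∈ Q, ENV' v 0 = false) ∧
      (∀ v ∈ Q₁, ENV' v 1 = true) ∧
      (∀ v ∈ Q \ Q₁, ENV' v 1 = false) := by
  classical
  choose p hadj hpQ hpN using hp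
  set S : Finset V := Q₁.attach.image (fun v : {x // x ∈ Q₁} => p v.1 v.2) with hS
  refine ⟨fun u i => if i = 0 then decide (u ∈ S) else
      decide (∃ w ∈ G.neighborFinset u, w ∈ S), ?_, ?_, ?_, ?_⟩
  · intro v
    simp
  · intro v hv
    simp only [if_pos trivial, decide_eq_false_iff_not]
    intro hvS
    rw [hS] at hvS
    simp only [Finset.mem_image, Finset.mem_attach, true_and, Subtype.exists] at hvS
    obtain ⟨w, hw, hwp⟩ := hvS
    exact hpQ w hw (hwp ▸ hv)
  · intro v hv
    have h10 : (1 : Fin 2) ≠ 0 := by decide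
    simp only [if_neg h10, decide_eq_true_iff]
    refine ⟨p v hv, ?_, ?_⟩
    · simpa using hadj v hv
    · rw [hS]
      simp only [Finset.mem_image, Finset.mem_attach, true_and, Subtype.exists]
      exact ⟨v, hv, rfl⟩
  · intro v hv
    have h10 : (1 : Fin 2) ≠ 0 := by decide
    simp only [if_neg h10, decide_eq_false_iff_not]
    rintro ⟨w, hwN, hwS⟩
    rw [hS] at hwS
    simp only [Finset.mem_image, Finset.mem_attach, true_and, Subtype.exists] at hwS
    obtain ⟨u, hu, hup⟩ := hwS
    exact hpN u hu v hv (by simpa [← hup] using (G.mem_neighborFinset v w).1 hwN)
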